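/- Let ≺ be a degree compatible term order on the monomials of k[x_1,...,x_n] such that for every homogeneous polynomial f, the leading term of f lies in the ideal ⟨x_1,...,x_k⟩ if and only if f itself lies in ⟨x_1,...,x_k⟩ (for every k). Then ≺ coincides with the degree reverse lexicographic order, defined by x^μ ≺ x^ν iff |μ| < |ν|, or |μ| = |ν| and the first nonvanishing entry of μ − ν is positive. -/

import Mathlib

open MvPolynomial

/-- The leading exponent of a multivariate polynomial with respect to a term order:
the maximal element of its support (`0` for the zero polynomial). -/
noncomputable def lexpMv {K : Type} [Field K] {n : ℕ} (ord : LinearOrder (Fin n →₀ ℕ))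
    (f : MvPolynomial (Fin n) K) : Fin n →₀ ℕ :=
  WithBot.unbotD 0 (@Finset.max _ ord f.support)

section helpers

lemma ord_le_of_lt {α : Type*} (ord : LinearOrder α) {a b : α} (h : ord.lt a b) :
    ord.le a b := by letI := ord; exact le_of_lt h

lemma ord_lt_of_le_ne {α : Type*} (ord : LinearOrder α) {a b : α} (h : ord.le a b)
    (hne : a ≠ b) : ord.lt a b := by letI := ord; exact lt_of_le_of_ne h hne

lemma ord_not_lt {α : Type*} (ord : LinearOrder α) {a b : α} (h : ord.lt a b) :
    ¬ ord.lt b a := by letI := ord; exact lt_asymm h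

lemma ord_irrefl {α : Type*} (ord : LinearOrder α) (a : α) : ¬ ord.lt a a := by
  letI := ord; exact lt_irrefl a

lemma maxPairAux {α : Type*} [Zero α] [DecidableEq α] (ord : LinearOrder α) (a b : α)
    (h : ord.le b a) : WithBot.unbotD 0 (@Finset.max _ ord {a, b}) = a := by
  letI := ord
  have h1 : ({a, b} : Finset α).max = (a : WithBot α) := by
    apply le_antisymm
    · apply Finset.max_le
      intro c hc
      rcases Finset.mem_insert.mp hc with rfl | hc
      · exact le_refl _
      · rw [Finset.mem_singleton] at hc; subst hc; exact WithBot.coe_le_coe.mpr h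
    · exact Finset.le_max (Finset.mem_insert_self a {b})
  rw [h1]
  rfl

end helpers

section aux

variable {K : Type} [Field K] {n : ℕ}

lemma setEqAux (k : ℕ) : {p : MvPolynomial (Fin n) K | ∃ i : Fin n, (i : ℕ) < k ∧ p = X i}
    = X '' {i : Fin n | (i : ℕ) < k} := by
  ext p
  simp only [Set.mem_setOf_eq, Set.mem_image]
  constructor
  · rintro ⟨i, hi, rfl⟩; exact ⟨i, hi, rfl⟩
  · rintro ⟨i, hi, rfl⟩; exact ⟨i, hi, rfl⟩

lemma degreeEqAux (d : Fin n →₀ ℕ) : d.degree = ∑ j, d j :=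
  Finset.sum_subset (Finset.subset_univ _) (fun j _ hj => Finsupp.notMem_support_iff.mp hj)

lemma firstDiffAux {μ ν : Fin n →₀ ℕ} (hne : μ ≠ ν) :
    ∃ i : Fin n, μ i ≠ ν i ∧ ∀ j < i, μ j = ν j := by
  classical
  have hex : ∃ i, μ i ≠ ν i := by
    by_contra h; push_neg at h; exact hne (Finsupp.ext h)
  set s := Finset.univ.filter (fun i : Fin n => μ i ≠ ν i) with hs_def
  have hs : s.Nonempty := ⟨hex.choose, by simp [hs_def, hex.choose_spec]⟩
  refine ⟨s.min' hs, ?_, ?_⟩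
  · have := Finset.min'_mem s hs
    simp only [hs_def, Finset.mem_filter] at this
    exact this.2
  · intro j hj
    by_contra hc
    have hjs : j ∈ s := by simp [hs_def, hc]
    exact absurd (Finset.min'_le s j hjs) (not_le.mpr hj)

lemma baseAux (ord : LinearOrder (Fin n →₀ ℕ))
    (hmain : ∀ (f : MvPolynomial (Fin n) K) (d : ℕ), f.IsHomogeneous d → f ≠ 0 →
      ∀ k : ℕ,
        ((MvPolynomial.monomial (lexpMv ord f)) (f.coeff (lexpMv ord f)) ∈
            Ideal.span {p : MvPolynomial (Fin n) K | ∃ i : Fin n, (i : ℕ) < k ∧ p = X i}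
          ↔ f ∈
            Ideal.span {p : MvPolynomial (Fin n) K | ∃ i : Fin n, (i : ℕ) < k ∧ p = X i}))
    (μ ν : Fin n →₀ ℕ) (i : Fin n)
    (hsum : (∑ j, μ j) = ∑ j, ν j) (hi : 0 < μ i) (hν : ∀ j ≤ i, ν j = 0) :
    ord.lt μ ν := by
  classical
  have hne : μ ≠ ν := by
    intro h; rw [h, hν i le_rfl] at hi; exact lt_irrefl 0 hi
  by_contra hlt
  have hle : ord.le ν μ := (@not_lt _ ord _ _).mp hlt
  set f : MvPolynomial (Fin n) K := monomial μ 1 + monomial ν 1 with hf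
  have hcμ : f.coeff μ = 1 := by
    rw [hf, coeff_add, coeff_monomial, coeff_monomial, if_pos rfl, if_neg (Ne.symm hne)]
    ring
  have hcν : f.coeff ν = 1 := by
    rw [hf, coeff_add, coeff_monomial, coeff_monomial, if_neg hne, if_pos rfl]
    ring
  have hsupp : f.support = {μ, ν} := by
    ext m
    simp only [mem_support_iff, Finset.mem_insert, Finset.mem_singleton, hf, coeff_add,
      coeff_monomial]
    split_ifs with h1 h2 <;> simp_all [eq_comm]
  have hfne : f ≠ 0 := by
    intro h
    rw [h] at hcν; simp at hcν
  have hhom : f.IsHomogeneous (∑ j, μ j) := by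
    apply MvPolynomial.IsHomogeneous.add
    · exact isHomogeneous_monomial _ (degreeEqAux μ)
    · exact isHomogeneous_monomial _ ((degreeEqAux ν).trans hsum.symm)
  have hlexp : lexpMv ord f = μ := by
    unfold lexpMv
    rw [hsupp]
    exact maxPairAux ord μ ν hle
  have hmem := (hmain f _ hhom hfne (i + 1)).mp ?_
  · rw [setEqAux, mem_ideal_span_X_image] at hmem
    obtain ⟨j, hj, hjne⟩ := hmem ν (by rw [hsupp]; simp)
    refine hjne (hν j ?_)
    have hj' : (j : ℕ) < (i : ℕ) + 1 := hj
    exact Fin.le_def.mpr (Nat.lt_succ_iff.mp hj')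
  · rw [hlexp, hcμ, setEqAux, mem_ideal_span_X_image]
    intro m hm
    rw [support_monomial, if_neg one_ne_zero, Finset.mem_singleton] at hm
    subst hm
    exact ⟨i, Set.mem_setOf_eq ▸ Nat.lt_succ_self _, hi.ne'⟩

lemma mainAux (ord : LinearOrder (Fin n →₀ ℕ))
    (hmul : ∀ μ ν σ : Fin n →₀ ℕ, ord.le μ ν → ord.le (σ + μ) (σ + ν))
    (hmain : ∀ (f : MvPolynomial (Fin n) K) (d : ℕ), f.IsHomogeneous d → f ≠ 0 →
      ∀ k : ℕ,
        ((MvPolynomial.monomial (lexpMv ord f)) (f.coeff (lexpMv ord f)) ∈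
            Ideal.span {p : MvPolynomial (Fin n) K | ∃ i : Fin n, (i : ℕ) < k ∧ p = X i}
          ↔ f ∈
            Ideal.span {p : MvPolynomial (Fin n) K | ∃ i : Fin n, (i : ℕ) < k ∧ p = X i}))
    (μ ν : Fin n →₀ ℕ) (i : Fin n)
    (hsum : (∑ j, μ j) = ∑ j, ν j) (hi : ν i < μ i) (hfirst : ∀ j < i, μ j = ν j) :
    ord.lt μ ν := by
  set μ' : Fin n →₀ ℕ := μ - ν with hμ'
  set ν' : Fin n →₀ ℕ := ν - μ with hν'
  set σ : Fin n →₀ ℕ := μ - (μ - ν) with hσ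
  have happμ : ∀ j, μ' j = μ j - ν j := fun j => by
    simp [hμ', Finsupp.tsub_apply]
  have happν : ∀ j, ν' j = ν j - μ j := fun j => by
    simp [hν', Finsupp.tsub_apply]
  have happσ : ∀ j, σ j = μ j - (μ j - ν j) := fun j => by
    simp [hσ, Finsupp.tsub_apply]
  have hμeq : μ = σ + μ' := by
    ext j; rw [Finsupp.add_apply, happσ, happμ]; omega
  have hνeq : ν = σ + ν' := by
    ext j; rw [Finsupp.add_apply, happσ, happν]; omega
  have hsum' : (∑ j, μ' j) = ∑ j, ν' j := by
    have h1 : (∑ j, μ j) = (∑ j, σ j) + ∑ j, μ' j := by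
      rw [← Finset.sum_add_distrib]
      exact Finset.sum_congr rfl fun j _ => by rw [hμeq]; exact Finsupp.add_apply σ μ' j
    have h2 : (∑ j, ν j) = (∑ j, σ j) + ∑ j, ν' j := by
      rw [← Finset.sum_add_distrib]
      exact Finset.sum_congr rfl fun j _ => by rw [hνeq]; exact Finsupp.add_apply σ ν' j
    omega
  have hi' : 0 < μ' i := by rw [happμ]; omega
  have hν'0 : ∀ j ≤ i, ν' j = 0 := by
    intro j hj
    rw [happν]
    rcases lt_or_eq_of_le hj with h | h
    · have := hfirst j h; omega
    · subst h; omega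
  have hbase := baseAux ord hmain μ' ν' i hsum' hi' hν'0
  have hne' : μ' ≠ ν' := by
    intro h
    rw [h] at hi'
    rw [hν'0 i le_rfl] at hi'
    exact lt_irrefl 0 hi'
  have hle := hmul μ' ν' σ (ord_le_of_lt ord hbase)
  rw [← hμeq, ← hνeq] at hle
  refine ord_lt_of_le_ne ord hle ?_
  intro h
  rw [hμeq, hνeq] at h
  exact hne' (add_left_cancel h)

end aux

/-- A degree compatible term order `≺` on the monomials of `k[x₁,…,xₙ]` such that for
every homogeneous polynomial `f` and every `k` the leading term of `f` lies in
`⟨x₁,…,x_k⟩` iff `f` does, coincides with the degree reverse lexicographic order: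
`x^μ ≺ x^ν` iff `|μ| < |ν|`, or `|μ| = |ν|` and the first nonvanishing entry of
`μ − ν` is positive. -/
theorem stmt19 {K : Type} [Field K] {n : ℕ} (ord : LinearOrder (Fin n →₀ ℕ))
    (hzero : ∀ μ : Fin n →₀ ℕ, ord.le 0 μ)
    (hmul : ∀ μ ν σ : Fin n →₀ ℕ, ord.le μ ν → ord.le (σ + μ) (σ + ν))
    (hdeg : ∀ μ ν : Fin n →₀ ℕ, (∑ i, μ i) < (∑ i, ν i) → ord.lt μ ν)
    (hmain : ∀ (f : MvPolynomial (Fin n) K) (d : ℕ), f.IsHomogeneous d → f ≠ 0 →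
      ∀ k : ℕ,
        ((MvPolynomial.monomial (lexpMv ord f)) (f.coeff (lexpMv ord f)) ∈
            Ideal.span {p : MvPolynomial (Fin n) K | ∃ i : Fin n, (i : ℕ) < k ∧ p = X i}
          ↔ f ∈
            Ideal.span {p : MvPolynomial (Fin n) K | ∃ i : Fin n, (i : ℕ) < k ∧ p = X i})) :
    ∀ μ ν : Fin n →₀ ℕ, ord.lt μ ν ↔
      ((∑ i, μ i) < (∑ i, ν i) ∨
        ((∑ i, μ i) = (∑ i, ν i) ∧ ∃ i : Fin n, ν i < μ i ∧ ∀ j < i, μ j = ν j)) := by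
  intro μ ν
  rcases lt_trichotomy (∑ i, μ i) (∑ i, ν i) with h | h | h
  · exact ⟨fun _ => Or.inl h, fun _ => hdeg μ ν h⟩
  · by_cases hne : μ = ν
    · subst hne
      constructor
      · intro hlt; exact absurd hlt (ord_irrefl ord μ)
      · rintro (h1 | ⟨-, i, hi, -⟩)
        · exact absurd h1 (lt_irrefl _)
        · exact absurd hi (lt_irrefl _)
    · obtain ⟨i, hdiff, hfirst⟩ := firstDiffAux hne
      rcases lt_or_gt_of_ne hdiff with hlt' | hgt'
      · have hνμ := mainAux (K := K) ord hmul hmain ν μ i h.symm hlt'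
          (fun j hj => (hfirst j hj).symm)
        constructor
        · intro hc; exact absurd hc (ord_not_lt ord hνμ)
        · rintro (h1 | ⟨-, i', hi', hfirst'⟩)
          · omega
          · rcases lt_trichotomy i i' with hii | hii | hii
            · have := hfirst' i hii; omega
            · subst hii; omega
            · have := hfirst i' hii; omega
      · have hμν := mainAux (K := K) ord hmul hmain μ ν i h hgt' hfirst
        exact ⟨fun _ => Or.inr ⟨h, i, hgt', hfirst⟩, fun _ => hμν⟩
  · have hνμ := hdeg ν μ h
    constructor
    · intro hc; exact absurd hc (ord_not_lt ord hνμ)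
    · rintro (h1 | ⟨he, -⟩)
      · omega
      · omega
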